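/- Let δ ∈ (0,1], 0 < u ≤ s, and let X ⊂ [0,1]^m be a (δ,s)-set with #X ≥ κ δ^{−s}. Then for every scale Δ with δ ≤ Δ ≤ 1, X contains a subset X′ that is a (Δ,s)-set with #X′ ≳ κ Δ^{−s}; moreover, for every u ≤ s, X contains a subset that is a (Δ,u)-set with cardinality ≳ κ Δ^{−u}. -/

import Mathlib

open Metric Set MeasureTheory
open scoped ENNReal

noncomputable section

/-- `F` is a `(δ,s)`-set with counting constant `C`. -/
def IsDeltaSet {α : Type*} [PseudoMetricSpace α] (δ s C : ℝ) (F : Finset α) : Prop :=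
  (∀ x ∈ F, ∀ y ∈ F, x ≠ y → δ ≤ dist x y) ∧
  ∀ (x : α) (r : ℝ), δ ≤ r → r ≤ 1 →
    (((F : Set α) ∩ closedBall x r).ncard : ℝ) ≤ C * (r / δ) ^ s

lemma ncard_inter_eq {α : Type*} (F : Finset α) (B : Set α) [DecidablePred (· ∈ B)] :
    ((F : Set α) ∩ B).ncard = (F.filter (fun p => p ∈ B)).card := by
  rw [← Set.ncard_coe_finset (F.filter (fun p => p ∈ B))]
  congr 1
  ext p
  simp [Finset.coe_filter, Set.mem_sep_iff, and_comm]

lemma key_lemma {α : Type*} [PseudoMetricSpace α] (s t C : ℝ) (ht : 0 < t) (hts : t ≤ s)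
    (hC : 0 < C) (δ Δ κ : ℝ) (hδ : 0 < δ) (hδΔ : δ ≤ Δ) (hΔ1 : Δ ≤ 1) (hκ : 0 < κ)
    (X : Finset α)
    (hcount : ∀ (x : α) (r : ℝ), δ ≤ r →
      (((X : Set α) ∩ closedBall x r).ncard : ℝ) ≤ C * (r / δ) ^ s)
    (hcard : κ * δ ^ (-s) ≤ (X.card : ℝ)) :
    ∃ S : Finset α, S ⊆ X ∧ IsDeltaSet Δ t 2 S ∧
      (C * (1 + 4 ^ s))⁻¹ * (κ * Δ ^ (-t)) ≤ (S.card : ℝ) := by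
  classical
  have hΔ0 : 0 < Δ := lt_of_lt_of_le hδ hδΔ
  -- a maximal admissible subset S
  set 𝒮 : Set (Finset α) := {S | S ⊆ X ∧ IsDeltaSet Δ t 2 S} with h𝒮
  have hfin : 𝒮.Finite := by
    apply Set.Finite.subset (X.powerset).finite_toSet
    intro S hS
    exact Finset.mem_coe.2 (Finset.mem_powerset.2 hS.1)
  have hne : 𝒮.Nonempty := by
    refine ⟨∅, Finset.empty_subset _, ?_, ?_⟩
    · simp
    · intro x r hr hr1
      simp only [Finset.coe_empty, Set.empty_inter, Set.ncard_empty, Nat.cast_zero]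
      have h1 : (0:ℝ) ≤ (r/Δ)^t := Real.rpow_nonneg (div_nonneg (hΔ0.le.trans hr) hΔ0.le) t
      linarith
  obtain ⟨S, hSmem, hmax⟩ := Set.Finite.exists_maximalFor id 𝒮 hfin hne
  obtain ⟨hSX, hSsep, hScnt⟩ := hSmem
  refine ⟨S, hSX, ⟨hSsep, hScnt⟩, ?_⟩
  -- rejection dichotomy
  have hrej : ∀ p ∈ X, (∃ q ∈ S, dist p q ≤ Δ) ∨
      ∃ (x : α) (r : ℝ), Δ ≤ r ∧ r ≤ 1 ∧ p ∈ closedBall x r ∧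
        (r / Δ) ^ t < (((S : Set α) ∩ closedBall x r).ncard : ℝ) := by
    intro p hp
    by_cases hpS : p ∈ S
    · exact Or.inl ⟨p, hpS, by simp [hΔ0.le]⟩
    have hnot : ¬ IsDeltaSet Δ t 2 (insert p S) := by
      intro h
      have hmem : insert p S ∈ 𝒮 := ⟨Finset.insert_subset hp hSX, h⟩
      have h2 := hmax hmem (Finset.subset_insert p S)
      simp only [id_eq] at h2
      exact hpS (h2 (Finset.mem_insert_self p S))
    rw [IsDeltaSet] at hnot
    rcases not_and_or.1 hnot with h | h
    · push_neg at h
      obtain ⟨a, ha, b, hb, hab, hd⟩ := h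
      rcases Finset.mem_insert.1 ha with rfl | haS
      · rcases Finset.mem_insert.1 hb with rfl | hbS
        · exact absurd rfl hab
        · exact Or.inl ⟨b, hbS, hd.le⟩
      · rcases Finset.mem_insert.1 hb with rfl | hbS
        · exact Or.inl ⟨a, haS, by rw [dist_comm]; exact hd.le⟩
        · exact absurd (hSsep a haS b hbS hab) (not_le.2 hd)
    · push_neg at h
      obtain ⟨x, r, hr, hr1, hlt⟩ := h
      have hpB : p ∈ closedBall x r := by
        by_contra hpB
        have heq : ((insert p S : Finset α) : Set α) ∩ closedBall x r
            = (S : Set α) ∩ closedBall x r := by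
          ext q
          simp only [Finset.coe_insert, Set.mem_inter_iff, Set.mem_insert_iff,
            Finset.mem_coe]
          constructor
          · rintro ⟨rfl | hq, hqB⟩
            · exact absurd hqB hpB
            · exact ⟨hq, hqB⟩
          · rintro ⟨hq, hqB⟩; exact ⟨Or.inr hq, hqB⟩
        rw [heq] at hlt
        exact absurd (hScnt x r hr hr1) (not_le.2 hlt)
      have hone : (1 : ℝ) ≤ (r / Δ) ^ t :=
        Real.one_le_rpow ((one_le_div hΔ0).2 hr) ht.le
      have hsub : ((insert p S : Finset α) : Set α) ∩ closedBall x r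
          ⊆ insert p ((S : Set α) ∩ closedBall x r) := by
        rintro q ⟨hq, hqB⟩
        rcases Finset.mem_insert.1 (Finset.mem_coe.1 hq) with rfl | hqS
        · exact Set.mem_insert _ _
        · exact Set.mem_insert_of_mem _ ⟨hqS, hqB⟩
      have hfin2 : ((S : Set α) ∩ closedBall x r).Finite :=
        S.finite_toSet.inter_of_left _
      have hle : (((insert p S : Finset α) : Set α) ∩ closedBall x r).ncard
          ≤ ((S : Set α) ∩ closedBall x r).ncard + 1 := by
        calc (((insert p S : Finset α) : Set α) ∩ closedBall x r).ncard
            ≤ (insert p ((S : Set α) ∩ closedBall x r)).ncard :=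
              Set.ncard_le_ncard hsub (hfin2.insert p)
          _ ≤ ((S : Set α) ∩ closedBall x r).ncard + 1 :=
              Set.ncard_insert_le _ _
      have hle' : (2 : ℝ) * (r / Δ) ^ t
          < (((S : Set α) ∩ closedBall x r).ncard : ℝ) + 1 := by
        refine lt_of_lt_of_le hlt ?_
        exact_mod_cast hle
      exact Or.inr ⟨x, r, hr, hr1, hpB, by linarith⟩
  -- split X
  set X₁ : Finset α := X.filter (fun p => ∃ q ∈ S, dist p q ≤ Δ) with hX₁
  set X₂ : Finset α := X.filter (fun p => ¬ ∃ q ∈ S, dist p q ≤ Δ) with hX₂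
  have hsplit : X₁.card + X₂.card = X.card := Finset.card_filter_add_card_filter_not _
  -- bound X₁
  have hbound1 : (X₁.card : ℝ) ≤ (S.card : ℝ) * (C * (Δ / δ) ^ s) := by
    have hsub : X₁ ⊆ S.biUnion (fun q => X.filter (fun p => p ∈ closedBall q Δ)) := by
      intro p hp
      have hmem := Finset.mem_filter.1 hp
      have hpX := hmem.1
      obtain ⟨q, hqS, hq⟩ := hmem.2
      exact Finset.mem_biUnion.2 ⟨q, hqS, Finset.mem_filter.2 ⟨hpX, mem_closedBall.2 hq⟩⟩
    calc (X₁.card : ℝ) ≤ ((S.biUnion (fun q => X.filter (fun p => p ∈ closedBall q Δ))).card : ℝ) := by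
          exact_mod_cast Finset.card_le_card hsub
      _ ≤ ∑ q ∈ S, ((X.filter (fun p => p ∈ closedBall q Δ)).card : ℝ) := by
          exact_mod_cast Finset.card_biUnion_le
      _ ≤ ∑ q ∈ S, C * (Δ / δ) ^ s := by
          refine Finset.sum_le_sum fun q _ => ?_
          rw [← ncard_inter_eq]
          exact hcount q Δ hδΔ
      _ = (S.card : ℝ) * (C * (Δ / δ) ^ s) := by
          rw [Finset.sum_const, nsmul_eq_mul]
  -- bound X₂ via Vitali
  have hbound2 : (X₂.card : ℝ) ≤ (S.card : ℝ) * (C * 4 ^ s * (Δ / δ) ^ s * Δ ^ (t - s)) := by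
    have hskol : ∀ p : α, ∃ (x : α) (r : ℝ), p ∈ X₂ →
        Δ ≤ r ∧ r ≤ 1 ∧ p ∈ closedBall x r ∧
          (r / Δ) ^ t < (((S : Set α) ∩ closedBall x r).ncard : ℝ) := by
      intro p
      by_cases hp : p ∈ X₂
      · have hmem := Finset.mem_filter.1 hp
        rcases hrej p hmem.1 with h | ⟨x, r, h1, h2, h3, h4⟩
        · exact absurd h hmem.2
        · exact ⟨x, r, fun _ => ⟨h1, h2, h3, h4⟩⟩
      · exact ⟨p, 1, fun h => absurd h hp⟩
    choose xc rc hc using hskol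
    obtain ⟨u, hu_sub, hu_disj, hu_cov⟩ :=
      Vitali.exists_disjoint_subfamily_covering_enlargement_closedBall (↑X₂ : Set α) xc rc 1
        (fun a ha => (hc a (Finset.mem_coe.1 ha)).2.1) 4 (by norm_num)
    have hufin : u.Finite := X₂.finite_toSet.subset hu_sub
    set V : Finset α := hufin.toFinset with hV
    have hVmem : ∀ b, b ∈ V ↔ b ∈ u := fun b => Set.Finite.mem_toFinset _
    have hVX₂ : ∀ b ∈ V, b ∈ X₂ := fun b hb => Finset.mem_coe.1 (hu_sub ((hVmem b).1 hb))
    have hcov : X₂ ⊆ V.biUnion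
        (fun b => X.filter (fun p => p ∈ closedBall (xc b) (4 * rc b))) := by
      intro p hp
      obtain ⟨b, hbu, hball⟩ := hu_cov p (Finset.mem_coe.2 hp)
      have hpball : p ∈ closedBall (xc p) (rc p) := (hc p hp).2.2.1
      exact Finset.mem_biUnion.2 ⟨b, (hVmem b).2 hbu,
        Finset.mem_filter.2 ⟨(Finset.mem_filter.1 hp).1, hball hpball⟩⟩
    have hdisj : ∀ b₁ ∈ V, ∀ b₂ ∈ V, b₁ ≠ b₂ →
        Disjoint (S.filter (fun p => p ∈ closedBall (xc b₁) (rc b₁)))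
                 (S.filter (fun p => p ∈ closedBall (xc b₂) (rc b₂))) := by
      intro b₁ h₁ b₂ h₂ hne12
      have hd := hu_disj ((hVmem b₁).1 h₁) ((hVmem b₂).1 h₂) hne12
      rw [Finset.disjoint_left]
      intro p hp₁ hp₂
      exact Set.disjoint_left.1 hd (Finset.mem_filter.1 hp₁).2 (Finset.mem_filter.1 hp₂).2
    have hsumS : ∑ b ∈ V, ((S.filter (fun p => p ∈ closedBall (xc b) (rc b))).card : ℝ)
        ≤ (S.card : ℝ) := by
      have h1 : (V.biUnion (fun b => S.filter (fun p => p ∈ closedBall (xc b) (rc b)))).card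
          = ∑ b ∈ V, (S.filter (fun p => p ∈ closedBall (xc b) (rc b))).card :=
        Finset.card_biUnion hdisj
      have h2 : (V.biUnion (fun b => S.filter (fun p => p ∈ closedBall (xc b) (rc b)))).card
          ≤ S.card :=
        Finset.card_le_card (Finset.biUnion_subset.2 fun b _ => Finset.filter_subset _ _)
      exact_mod_cast h1 ▸ h2
    have hterm : ∀ b ∈ V, ((X.filter (fun p => p ∈ closedBall (xc b) (4 * rc b))).card : ℝ)
        ≤ (C * 4 ^ s * (Δ / δ) ^ s * Δ ^ (t - s)) *
            ((S.filter (fun p => p ∈ closedBall (xc b) (rc b))).card : ℝ) := by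
      intro b hb
      obtain ⟨hrΔ, hr1, _, hrN⟩ := hc b (hVX₂ b hb)
      have hr0 : 0 < rc b := lt_of_lt_of_le hΔ0 hrΔ
      have hN : (rc b / Δ) ^ t ≤ ((S.filter (fun p => p ∈ closedBall (xc b) (rc b))).card : ℝ) := by
        rw [← ncard_inter_eq]
        exact hrN.le
      have hN0 : (0:ℝ) ≤ ((S.filter (fun p => p ∈ closedBall (xc b) (rc b))).card : ℝ) :=
        Nat.cast_nonneg _
      have step1 : ((X.filter (fun p => p ∈ closedBall (xc b) (4 * rc b))).card : ℝ)
          ≤ C * ((4 * rc b) / δ) ^ s := by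
        rw [← ncard_inter_eq]
        exact hcount (xc b) (4 * rc b) (by linarith [hδΔ.trans hrΔ])
      have e1 : (4 * rc b) / δ = 4 * ((Δ / δ) * (rc b / Δ)) := by
        field_simp
      have e2 : ((4 * rc b) / δ) ^ s = 4 ^ s * ((Δ / δ) ^ s * (rc b / Δ) ^ s) := by
        rw [e1, Real.mul_rpow (by norm_num) (by positivity),
          Real.mul_rpow (by positivity) (by positivity)]
      have e3 : (rc b / Δ) ^ s = (rc b / Δ) ^ t * (rc b / Δ) ^ (s - t) := by
        rw [← Real.rpow_add (by positivity)]
        congr 1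
        ring
      have e4 : (rc b / Δ) ^ (s - t) ≤ Δ ^ (t - s) := by
        have h5 : (rc b / Δ) ^ (s - t) ≤ (1 / Δ) ^ (s - t) :=
          Real.rpow_le_rpow (by positivity) (by gcongr) (by linarith)
        have h6 : (1 / Δ) ^ (s - t) = Δ ^ (t - s) := by
          rw [one_div, Real.inv_rpow hΔ0.le, ← Real.rpow_neg hΔ0.le, neg_sub]
        rw [← h6]; exact h5
      have key : (rc b / Δ) ^ s ≤ Δ ^ (t - s) *
          ((S.filter (fun p => p ∈ closedBall (xc b) (rc b))).card : ℝ) := by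
        rw [e3]
        calc (rc b / Δ) ^ t * (rc b / Δ) ^ (s - t)
            ≤ ((S.filter (fun p => p ∈ closedBall (xc b) (rc b))).card : ℝ) * Δ ^ (t - s) :=
              mul_le_mul hN e4 (Real.rpow_nonneg (by positivity) _) hN0
        _ = Δ ^ (t - s) * _ := mul_comm _ _
      calc ((X.filter (fun p => p ∈ closedBall (xc b) (4 * rc b))).card : ℝ)
          ≤ C * ((4 * rc b) / δ) ^ s := step1
        _ = (C * 4 ^ s * (Δ / δ) ^ s) * (rc b / Δ) ^ s := by rw [e2]; ring
        _ ≤ (C * 4 ^ s * (Δ / δ) ^ s) * (Δ ^ (t - s) *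
              ((S.filter (fun p => p ∈ closedBall (xc b) (rc b))).card : ℝ)) := by
            refine mul_le_mul_of_nonneg_left key ?_
            positivity
        _ = (C * 4 ^ s * (Δ / δ) ^ s * Δ ^ (t - s)) *
              ((S.filter (fun p => p ∈ closedBall (xc b) (rc b))).card : ℝ) := by ring
    calc (X₂.card : ℝ)
        ≤ ((V.biUnion (fun b => X.filter (fun p => p ∈ closedBall (xc b) (4 * rc b)))).card : ℝ) := by
          exact_mod_cast Finset.card_le_card hcov
      _ ≤ ∑ b ∈ V, ((X.filter (fun p => p ∈ closedBall (xc b) (4 * rc b))).card : ℝ) := by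
          exact_mod_cast Finset.card_biUnion_le
      _ ≤ ∑ b ∈ V, (C * 4 ^ s * (Δ / δ) ^ s * Δ ^ (t - s)) *
            ((S.filter (fun p => p ∈ closedBall (xc b) (rc b))).card : ℝ) :=
          Finset.sum_le_sum hterm
      _ = (C * 4 ^ s * (Δ / δ) ^ s * Δ ^ (t - s)) *
            ∑ b ∈ V, ((S.filter (fun p => p ∈ closedBall (xc b) (rc b))).card : ℝ) := by
          rw [Finset.mul_sum]
      _ ≤ (C * 4 ^ s * (Δ / δ) ^ s * Δ ^ (t - s)) * (S.card : ℝ) := by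
          refine mul_le_mul_of_nonneg_left hsumS ?_
          have h4s : (0:ℝ) < 4 ^ s := Real.rpow_pos_of_pos (by norm_num) s
          have hdd : (0:ℝ) ≤ (Δ / δ) ^ s := Real.rpow_nonneg (by positivity) s
          have htt : (0:ℝ) ≤ Δ ^ (t - s) := Real.rpow_nonneg hΔ0.le _
          positivity
      _ = (S.card : ℝ) * (C * 4 ^ s * (Δ / δ) ^ s * Δ ^ (t - s)) := mul_comm _ _
  -- combine
  have h4s : (0:ℝ) < 4 ^ s := Real.rpow_pos_of_pos (by norm_num) s
  have hΔts : (1:ℝ) ≤ Δ ^ (t - s) :=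
    Real.one_le_rpow_of_pos_of_le_one_of_nonpos hΔ0 hΔ1 (by linarith)
  have hS0 : (0:ℝ) ≤ (S.card : ℝ) := Nat.cast_nonneg _
  have hE : (0:ℝ) < (Δ / δ) ^ s * Δ ^ (t - s) := by
    have := Real.rpow_pos_of_pos (div_pos hΔ0 hδ) s
    have := Real.rpow_pos_of_pos hΔ0 (t - s)
    positivity
  have hmain : κ * δ ^ (-s) ≤ (S.card : ℝ) * (C * (1 + 4 ^ s)) * ((Δ / δ) ^ s * Δ ^ (t - s)) := by
    have hx : (X.card : ℝ) = (X₁.card : ℝ) + (X₂.card : ℝ) := by exact_mod_cast hsplit.symm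
    have h1 : (S.card : ℝ) * (C * (Δ / δ) ^ s)
        ≤ (S.card : ℝ) * (C * (Δ / δ) ^ s) * Δ ^ (t - s) := by
      refine le_mul_of_one_le_right ?_ hΔts
      have hdd : (0:ℝ) ≤ (Δ / δ) ^ s := Real.rpow_nonneg (by positivity) s
      positivity
    have h2 : (S.card : ℝ) * (C * (Δ / δ) ^ s) * Δ ^ (t - s)
          + (S.card : ℝ) * (C * 4 ^ s * (Δ / δ) ^ s * Δ ^ (t - s))
        = (S.card : ℝ) * (C * (1 + 4 ^ s)) * ((Δ / δ) ^ s * Δ ^ (t - s)) := by ring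
    calc κ * δ ^ (-s) ≤ (X.card : ℝ) := hcard
      _ = (X₁.card : ℝ) + (X₂.card : ℝ) := hx
      _ ≤ (S.card : ℝ) * (C * (Δ / δ) ^ s)
            + (S.card : ℝ) * (C * 4 ^ s * (Δ / δ) ^ s * Δ ^ (t - s)) := add_le_add hbound1 hbound2
      _ ≤ (S.card : ℝ) * (C * (1 + 4 ^ s)) * ((Δ / δ) ^ s * Δ ^ (t - s)) := by linarith
  have hid : κ * δ ^ (-s) = (κ * Δ ^ (-t)) * ((Δ / δ) ^ s * Δ ^ (t - s)) := by
    rw [Real.div_rpow hΔ0.le hδ.le, div_eq_mul_inv, ← Real.rpow_neg hδ.le]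
    have e6 : Δ ^ (-t) * (Δ ^ s * Δ ^ (t - s)) = 1 := by
      rw [← Real.rpow_add hΔ0, ← Real.rpow_add hΔ0]
      norm_num
    linear_combination (-(κ * δ ^ (-s))) * e6
  rw [hid] at hmain
  have hfinal : κ * Δ ^ (-t) ≤ (S.card : ℝ) * (C * (1 + 4 ^ s)) :=
    le_of_mul_le_mul_right hmain hE
  have hCpos : (0:ℝ) < C * (1 + 4 ^ s) := by positivity
  rw [inv_mul_le_iff₀ hCpos]
  calc κ * Δ ^ (-t) ≤ (S.card : ℝ) * (C * (1 + 4 ^ s)) := hfinal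
    _ = C * (1 + 4 ^ s) * (S.card : ℝ) := mul_comm _ _

lemma extend_count (m : ℕ) (s C δ : ℝ) (hδ0 : 0 < δ) (hδ1 : δ ≤ 1) (hs : 0 ≤ s)
    (hC : 0 ≤ C) (X : Finset (Fin m → ℝ))
    (hcube : (X : Set (Fin m → ℝ)) ⊆ {x | ∀ i, x i ∈ Icc (0:ℝ) 1})
    (hX : IsDeltaSet δ s C X) :
    ∀ (x : Fin m → ℝ) (r : ℝ), δ ≤ r →
      (((X : Set (Fin m → ℝ)) ∩ closedBall x r).ncard : ℝ) ≤ C * (r / δ) ^ s := by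
  intro x r hr
  rcases le_or_gt r 1 with h1 | h1
  · exact hX.2 x r hr h1
  · set c : Fin m → ℝ := fun _ => 1/2 with hc
    have hsub : (X : Set (Fin m → ℝ)) ∩ closedBall x r
        ⊆ (X : Set (Fin m → ℝ)) ∩ closedBall c 1 := by
      rintro q ⟨hq, -⟩
      refine ⟨hq, ?_⟩
      rw [mem_closedBall, dist_pi_le_iff (by norm_num : (0:ℝ) ≤ 1)]
      intro i
      have hqi := hcube hq i
      simp only [hc, Real.dist_eq]
      rw [abs_le]
      constructor <;> linarith [hqi.1, hqi.2]
    calc (((X : Set (Fin m → ℝ)) ∩ closedBall x r).ncard : ℝ)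
        ≤ (((X : Set (Fin m → ℝ)) ∩ closedBall c 1).ncard : ℝ) := by
          exact_mod_cast Set.ncard_le_ncard hsub (X.finite_toSet.inter_of_left _)
      _ ≤ C * (1 / δ) ^ s := hX.2 c 1 hδ1 le_rfl
      _ ≤ C * (r / δ) ^ s := by
          refine mul_le_mul_of_nonneg_left ?_ hC
          exact Real.rpow_le_rpow (by positivity) (by gcongr) hs

/-- a `(δ,s)`-set `X ⊆ [0,1]^m` with `#X ≥ κ δ^{-s}` contains,
for every `δ ≤ Δ ≤ 1`, a `(Δ,s)`-subset of cardinality `≳ κ Δ^{-s}`, and for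
every `0 < u ≤ s` a `(Δ,u)`-subset of cardinality `≳ κ Δ^{-u}`. -/
theorem delta_set_rescaling (m : ℕ) (s u C : ℝ) (hs : 0 < s) (hu : 0 < u) (hus : u ≤ s)
    (hC : 0 < C) :
    ∃ C' > (0:ℝ), ∃ c > (0:ℝ),
      ∀ (δ : ℝ), 0 < δ → δ ≤ 1 → ∀ (κ : ℝ), 0 < κ →
        ∀ X : Finset (Fin m → ℝ), (X : Set (Fin m → ℝ)) ⊆ {x | ∀ i, x i ∈ Icc (0:ℝ) 1} →
          IsDeltaSet δ s C X → κ * δ ^ (-s) ≤ (X.card : ℝ) →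
            ∀ (Δ : ℝ), δ ≤ Δ → Δ ≤ 1 →
              (∃ X' : Finset (Fin m → ℝ), X' ⊆ X ∧ IsDeltaSet Δ s C' X' ∧
                  c * (κ * Δ ^ (-s)) ≤ (X'.card : ℝ)) ∧
              (∃ X' : Finset (Fin m → ℝ), X' ⊆ X ∧ IsDeltaSet Δ u C' X' ∧
                  c * (κ * Δ ^ (-u)) ≤ (X'.card : ℝ)) := by
  have h4s : (0:ℝ) < (4:ℝ) ^ s := Real.rpow_pos_of_pos (by norm_num) s
  refine ⟨2, by norm_num, (C * (1 + 4 ^ s))⁻¹, by positivity, ?_⟩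
  intro δ hδ0 hδ1 κ hκ X hcube hX hcard Δ hδΔ hΔ1
  have hcnt := extend_count m s C δ hδ0 hδ1 hs.le hC.le X hcube hX
  constructor
  · obtain ⟨S, h1, h2, h3⟩ := key_lemma s s C hs le_rfl hC δ Δ κ hδ0 hδΔ hΔ1 hκ X hcnt hcard
    exact ⟨S, h1, h2, h3⟩
  · obtain ⟨S, h1, h2, h3⟩ := key_lemma s u C hu hus hC δ Δ κ hδ0 hδΔ hΔ1 hκ X hcnt hcard
    exact ⟨S, h1, h2, h3⟩
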